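/- arXiv:1504.04124 — 2 statements merged into one kernel-verified Lean document; each statement's English description precedes it below -/
import Mathlib

section
/- Let J_α(v) := ∫_{ℝ³} |v−w|^α μ(w) dw where μ is the standard Gaussian on ℝ³. If −3 < α < 0, then there exists a constant C > 0 such that J_α(v) ≤ C ⟨v⟩^α for all v ∈ ℝ³, where ⟨v⟩ = (1+|v|²)^{1/2}. -/
open MeasureTheory Real

noncomputable section

abbrev R3 := EuclideanSpace ℝ (Fin 3)

/-- The standard Maxwellian (Gaussian) on ℝ³. -/
def mu (w : R3) : ℝ := (2 * π) ^ (-(3:ℝ)/2) * Real.exp (-‖w‖ ^ 2 / 2)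

/-- The Japanese bracket ⟨v⟩ = (1 + |v|²)^{1/2}. -/
def jb (v : R3) : ℝ := Real.sqrt (1 + ‖v‖ ^ 2)

open Metric Set Filter
open scoped ENNReal

lemma mu_nonneg (w : R3) : 0 ≤ mu w := by
  unfold mu; positivity

lemma finrank_R3 : Module.finrank ℝ R3 = 3 := by
  simp [finrank_euclideanSpace]

lemma integrable_gauss : Integrable (fun w : R3 => Real.exp (-‖w‖ ^ 2 / 2)) := by
  have h := (GaussianFourier.integrable_cexp_neg_mul_sq_norm_add
    (V := R3) (b := (1/2 : ℂ)) (by norm_num) 0 0).norm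
  refine h.congr ?_
  filter_upwards with v
  rw [Complex.norm_exp]
  congr 1
  simp [← Complex.ofReal_pow, Complex.add_re, Complex.mul_re]
  ring

lemma integrable_mu : Integrable mu := by
  unfold mu
  exact integrable_gauss.const_mul _

lemma meas_rpow (α : ℝ) : Measurable (fun x : R3 => ‖x‖ ^ α) := by
  fun_prop

/-- Integrability of `‖x‖^α` on balls for `-3 < α < 0`. -/
lemma intOn_ball (α : ℝ) (h1 : -3 < α) (h2 : α < 0) (r : ℝ) :
    IntegrableOn (fun x : R3 => ‖x‖ ^ α) (ball 0 r) := by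
  have hmeas := meas_rpow α
  have hnn : ∀ x : R3, 0 ≤ ‖x‖ ^ α := fun x => rpow_nonneg (norm_nonneg x) α
  constructor
  · exact hmeas.aestronglyMeasurable.restrict
  · rw [hasFiniteIntegral_iff_ofReal (Eventually.of_forall hnn)]
    rw [lintegral_eq_lintegral_meas_le _ (Eventually.of_forall hnn) hmeas.aemeasurable]
    set μ' := volume.restrict (ball (0:R3) r) with hμ'
    calc ∫⁻ t in Ioi 0, μ' {a | t ≤ ‖a‖ ^ α}
        ≤ ∫⁻ t in Ioc 0 1 ∪ Ioi 1, μ' {a | t ≤ ‖a‖ ^ α} :=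
          lintegral_mono_set Ioi_subset_Ioc_union_Ioi
      _ ≤ (∫⁻ t in Ioc 0 1, μ' {a | t ≤ ‖a‖ ^ α}) + ∫⁻ t in Ioi 1, μ' {a | t ≤ ‖a‖ ^ α} :=
          lintegral_union_le _ _ _
      _ < ∞ := ENNReal.add_lt_top.2 ⟨?_, ?_⟩
    · -- integral over (0,1]: bounded by the volume of the ball
      have hb : ∀ t ∈ Ioc (0:ℝ) 1, μ' {a | t ≤ ‖a‖ ^ α} ≤ volume (ball (0:R3) r) := by
        intro t _
        calc μ' {a | t ≤ ‖a‖ ^ α} ≤ μ' univ := measure_mono (subset_univ _)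
          _ = volume (ball (0:R3) r) := by simp [hμ']
      refine lt_of_le_of_lt (setLIntegral_mono' measurableSet_Ioc hb) ?_
      rw [setLIntegral_const]
      exact ENNReal.mul_lt_top measure_ball_lt_top (by simp [Real.volume_Ioc])
    · -- integral over (1,∞): superlevel sets are small balls
      have hsub : ∀ t ∈ Ioi (1:ℝ), μ' {a | t ≤ ‖a‖ ^ α}
          ≤ ENNReal.ofReal (t ^ (3 * α⁻¹)) * volume (ball (0:R3) 1) := by
        intro t ht
        have ht1 : (1:ℝ) < t := ht
        have ht0 : (0:ℝ) < t := by linarith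
        have hss : {a : R3 | t ≤ ‖a‖ ^ α} ⊆ closedBall 0 (t ^ α⁻¹) := by
          intro a ha
          simp only [mem_setOf_eq] at ha
          have ha0 : a ≠ 0 := by
            intro h
            rw [h] at ha
            simp only [norm_zero] at ha
            rw [Real.zero_rpow (ne_of_lt h2)] at ha
            linarith
          have hna : 0 < ‖a‖ := norm_pos_iff.mpr ha0
          rw [mem_closedBall_zero_iff]
          exact (Real.le_rpow_inv_iff_of_neg hna ht0 h2).mpr ha
        calc μ' {a : R3 | t ≤ ‖a‖ ^ α} ≤ volume {a : R3 | t ≤ ‖a‖ ^ α} :=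
              Measure.restrict_le_self _
          _ ≤ volume (closedBall (0:R3) (t ^ α⁻¹)) := measure_mono hss
          _ = ENNReal.ofReal ((t ^ α⁻¹) ^ Module.finrank ℝ R3) * volume (ball (0:R3) 1) :=
              volume.addHaar_closedBall _ (Real.rpow_nonneg ht0.le _)
          _ = ENNReal.ofReal (t ^ (3 * α⁻¹)) * volume (ball (0:R3) 1) := by
              rw [finrank_R3, ← Real.rpow_natCast (t ^ α⁻¹) 3, ← Real.rpow_mul ht0.le]
              norm_num [mul_comm]
      refine lt_of_le_of_lt (setLIntegral_mono' measurableSet_Ioi hsub) ?_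
      rw [lintegral_mul_const' _ _ measure_ball_lt_top.ne]
      refine ENNReal.mul_lt_top ?_ measure_ball_lt_top
      have hlt : 3 * α⁻¹ < -1 := by
        rw [mul_comm, ← div_eq_inv_mul]
        rw [div_lt_iff_of_neg h2]
        linarith
      exact (integrableOn_Ioi_rpow_of_lt hlt one_pos).setLIntegral_lt_top

lemma translate_indicator (α : ℝ) (v : R3) (r : ℝ) (w : R3) :
    (ball (0:R3) r).indicator (fun x => ‖x‖ ^ α) (v - w)
      = (ball v r).indicator (fun w => ‖v - w‖ ^ α) w := by
  have hmem : v - w ∈ ball (0:R3) r ↔ w ∈ ball v r := by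
    rw [mem_ball_zero_iff, mem_ball, dist_eq_norm, norm_sub_rev]
  by_cases h : w ∈ ball v r
  · rw [indicator_of_mem h, indicator_of_mem (hmem.mpr h)]
  · rw [indicator_of_notMem h, indicator_of_notMem (fun hc => h (hmem.mp hc))]

lemma intOn_ball_shift (α : ℝ) (h1 : -3 < α) (h2 : α < 0) (v : R3) (r : ℝ) :
    IntegrableOn (fun w : R3 => ‖v - w‖ ^ α) (ball v r) := by
  rw [← integrable_indicator_iff measurableSet_ball]
  have h := (integrable_indicator_iff
    (measurableSet_ball (x := (0:R3)) (ε := r))).mpr (intOn_ball α h1 h2 r)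
  have h2' := (integrable_comp_sub_left
    ((ball (0:R3) r).indicator fun x => ‖x‖ ^ α) v).mpr h
  exact h2'.congr (Eventually.of_forall fun w => translate_indicator α v r w)

lemma integral_shift (α : ℝ) (v : R3) (r : ℝ) :
    ∫ w, (ball v r).indicator (fun w => ‖v - w‖ ^ α) w
      = ∫ x in ball (0:R3) r, ‖x‖ ^ α := by
  rw [← integral_indicator measurableSet_ball]
  rw [← integral_sub_left_eq_self ((ball (0:R3) r).indicator fun x => ‖x‖ ^ α) volume v]
  exact integral_congr_ae (Eventually.of_forall fun w => (translate_indicator α v r w).symm)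

lemma integral_ball_scaled (α : ℝ) {r : ℝ} (hr : 0 < r) :
    ∫ x in ball (0:R3) r, ‖x‖ ^ α
      = r ^ 3 * (r ^ α * ∫ x in ball (0:R3) 1, ‖x‖ ^ α) := by
  have h := Measure.setIntegral_comp_smul_of_pos (volume : Measure R3) (fun x : R3 => ‖x‖ ^ α)
    (ball (0:R3) 1) hr
  rw [smul_unitBall_of_pos hr, finrank_R3] at h
  have heq : ∀ x ∈ ball (0:R3) 1, ‖r • x‖ ^ α = r ^ α * ‖x‖ ^ α := by
    intro x _
    rw [norm_smul, Real.norm_eq_abs, abs_of_pos hr, Real.mul_rpow hr.le (norm_nonneg x)]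
  rw [setIntegral_congr_fun measurableSet_ball heq, integral_const_mul, smul_eq_mul] at h
  beta_reduce at h
  rw [h, ← mul_assoc, mul_inv_cancel₀ (by positivity : (r:ℝ)^3 ≠ 0), one_mul]

lemma cube_bound (t : ℝ) (ht : 0 ≤ t) :
    (1 + t) ^ 3 ≤ 110592 * Real.exp ((t - 1) ^ 2 / 8) := by
  set x := (t - 1) ^ 2 / 8 with hx
  have hx0 : 0 ≤ x := by positivity
  have h3 : (x / 3) ^ 3 ≤ Real.exp x := by
    have h := Real.add_one_le_exp (x / 3)
    have h0 : x / 3 ≤ Real.exp (x / 3) := by linarith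
    calc (x/3)^3 ≤ (Real.exp (x/3))^3 := pow_le_pow_left₀ (by positivity) h0 3
      _ = Real.exp x := by
          rw [← Real.exp_nat_mul]
          congr 1
          push_cast
          ring
  have h1 : 1 ≤ Real.exp x := Real.one_le_exp hx0
  rw [hx] at h3
  have h6 : (t - 1) ^ 6 ≤ 13824 * Real.exp ((t - 1) ^ 2 / 8) := by
    have he : ((t - 1) ^ 2 / 8 / 3) ^ 3 = (t - 1) ^ 6 / 13824 := by ring
    rw [he] at h3
    linarith
  have hE0 : (0:ℝ) ≤ Real.exp ((t - 1) ^ 2 / 8) := (Real.exp_pos _).le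
  rcases le_or_gt t 7 with hc | hc
  · have : (1 + t) ^ 3 ≤ 8 ^ 3 := pow_le_pow_left₀ (by linarith) (by linarith) 3
    have h1' : (110592 : ℝ) ≤ 110592 * Real.exp ((t - 1) ^ 2 / 8) := by linarith
    norm_num at this
    linarith
  · have h16 : (1 + t) ≤ (t - 1) ^ 2 := by nlinarith
    have : (1 + t) ^ 3 ≤ (t - 1) ^ 6 := by
      calc (1 + t) ^ 3 ≤ ((t - 1) ^ 2) ^ 3 := pow_le_pow_left₀ (by linarith) h16 3
        _ = (t - 1) ^ 6 := by ring
    linarith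

theorem stmt2 (α : ℝ) (h1 : -3 < α) (h2 : α < 0) :
    ∃ C : ℝ, 0 < C ∧ ∀ v : R3,
      (∫ w : R3, ‖v - w‖ ^ α * mu w) ≤ C * jb v ^ α := by
  set K : ℝ := (2 * π) ^ (-(3:ℝ)/2) with hK
  have hKpos : 0 < K := Real.rpow_pos_of_pos (by positivity) _
  set I1 : ℝ := ∫ x in ball (0:R3) 1, ‖x‖ ^ α with hI1
  have hI1nn : 0 ≤ I1 := setIntegral_nonneg measurableSet_ball
    (fun x _ => Real.rpow_nonneg (norm_nonneg x) α)
  set M0 : ℝ := ∫ w, mu w with hM0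
  have hM0nn : 0 ≤ M0 := integral_nonneg mu_nonneg
  set A : ℝ := K * Real.exp 1 * 13824 * 2 ^ (-α) * I1 with hA
  set B : ℝ := 2 ^ (-α) * M0 with hB
  have hAnn : 0 ≤ A := by
    apply mul_nonneg _ hI1nn
    positivity
  have hBnn : 0 ≤ B := mul_nonneg (by positivity) hM0nn
  refine ⟨A + B + 1, by linarith, ?_⟩
  intro v
  set t : ℝ := ‖v‖ with htdef
  have ht : 0 ≤ t := norm_nonneg v
  set r : ℝ := (1 + t) / 2 with hrdef
  have hr : 0 < r := by positivity
  set CN : ℝ := K * Real.exp 1 * Real.exp (-(t - 1) ^ 2 / 8) with hCN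
  have hCNpos : 0 < CN := by positivity
  have hjb0 : 0 < jb v := Real.sqrt_pos.mpr (by positivity)
  have hjba : 0 < jb v ^ α := Real.rpow_pos_of_pos hjb0 α
  have hjbr : jb v / 2 ≤ r := by
    have h := sqrt_one_add_norm_sq_le v
    have : jb v ≤ 1 + t := h
    rw [hrdef]; linarith
  have hrα : r ^ α ≤ 2 ^ (-α) * jb v ^ α := by
    calc r ^ α ≤ (jb v / 2) ^ α :=
          Real.rpow_le_rpow_of_nonpos (by positivity) hjbr h2.le
      _ = jb v ^ α / 2 ^ α := Real.div_rpow hjb0.le (by norm_num : (0:ℝ) ≤ 2) α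
      _ = 2 ^ (-α) * jb v ^ α := by
          rw [Real.rpow_neg (by norm_num), div_eq_mul_inv]; ring
  have hrα0 : 0 ≤ r ^ α := Real.rpow_nonneg hr.le α
  -- integrable majorant
  have hIball := intOn_ball_shift α h1 h2 v r
  have hind : Integrable ((ball v r).indicator fun w => ‖v - w‖ ^ α) :=
    (integrable_indicator_iff measurableSet_ball).mpr hIball
  have hg : Integrable (fun w : R3 =>
      CN * (ball v r).indicator (fun w => ‖v - w‖ ^ α) w + r ^ α * mu w) :=
    (hind.const_mul CN).add (integrable_mu.const_mul _)
  -- pointwise bound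
  have hpt : ∀ w : R3, ‖v - w‖ ^ α * mu w
      ≤ CN * (ball v r).indicator (fun w => ‖v - w‖ ^ α) w + r ^ α * mu w := by
    intro w
    have hμnn := mu_nonneg w
    have hvwnn : 0 ≤ ‖v - w‖ ^ α := Real.rpow_nonneg (norm_nonneg _) α
    by_cases hw : w ∈ ball v r
    · rw [indicator_of_mem hw]
      have hnw : (t - 1) / 2 ≤ ‖w‖ := by
        have hd : dist w v < r := mem_ball.mp hw
        rw [dist_eq_norm, norm_sub_rev] at hd
        have := norm_sub_norm_le v w
        rw [hrdef] at hd
        rw [htdef] at *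
        linarith [this.trans hd.le]
      have hmuw : mu w ≤ CN := by
        have hsq : -‖w‖ ^ 2 / 2 ≤ 1 + -(t - 1) ^ 2 / 8 := by
          have hprod : 0 ≤ t * (2 * ‖w‖ - (t - 1)) := mul_nonneg ht (by linarith)
          nlinarith [hprod, sq_nonneg (2 * ‖w‖ - (t - 1) - 1)]
        calc mu w = K * Real.exp (-‖w‖ ^ 2 / 2) := rfl
          _ ≤ K * Real.exp (1 + -(t - 1) ^ 2 / 8) :=
              mul_le_mul_of_nonneg_left (Real.exp_le_exp.mpr hsq) hKpos.le
          _ = CN := by rw [hCN, Real.exp_add]; ring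
      have := mul_le_mul_of_nonneg_left hmuw hvwnn
      have h2nd : 0 ≤ r ^ α * mu w := mul_nonneg hrα0 hμnn
      nlinarith [this]
    · rw [indicator_of_notMem hw]
      have hd : r ≤ ‖v - w‖ := by
        have : ¬ dist w v < r := fun hc => hw (mem_ball.mpr hc)
        rw [dist_eq_norm, norm_sub_rev] at this
        linarith [not_lt.mp this]
      have hle : ‖v - w‖ ^ α ≤ r ^ α := Real.rpow_le_rpow_of_nonpos hr hd h2.le
      rw [mul_zero, zero_add]
      exact mul_le_mul_of_nonneg_right hle hμnn
  -- integral comparison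
  have key : (∫ w : R3, ‖v - w‖ ^ α * mu w)
      ≤ ∫ w : R3, (CN * (ball v r).indicator (fun w => ‖v - w‖ ^ α) w + r ^ α * mu w) :=
    integral_mono_of_nonneg
      (Eventually.of_forall fun w =>
        mul_nonneg (Real.rpow_nonneg (norm_nonneg _) α) (mu_nonneg w))
      hg (Eventually.of_forall hpt)
  rw [integral_add (hind.const_mul CN) (integrable_mu.const_mul _),
    integral_const_mul, integral_const_mul] at key
  rw [integral_shift α v r, integral_ball_scaled α hr] at key
  -- final estimate
  have hCN3 : CN * r ^ 3 ≤ K * Real.exp 1 * 13824 := by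
    have hcube := cube_bound t ht
    have hr3 : r ^ 3 = (1 + t) ^ 3 / 8 := by rw [hrdef]; ring
    have hexp : Real.exp (-(t - 1) ^ 2 / 8) * Real.exp ((t - 1) ^ 2 / 8) = 1 := by
      rw [← Real.exp_add, show -(t - 1) ^ 2 / 8 + (t - 1) ^ 2 / 8 = 0 by ring, Real.exp_zero]
    have hepos : 0 < Real.exp (-(t - 1) ^ 2 / 8) := Real.exp_pos _
    calc CN * r ^ 3 = K * Real.exp 1 * (Real.exp (-(t - 1) ^ 2 / 8) * ((1 + t) ^ 3 / 8)) := by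
          rw [hCN, hr3]; ring
      _ ≤ K * Real.exp 1 * (Real.exp (-(t - 1) ^ 2 / 8) *
            (110592 * Real.exp ((t - 1) ^ 2 / 8) / 8)) := by
          gcongr
      _ = K * Real.exp 1 * 13824 := by
          rw [mul_comm (110592 : ℝ) (Real.exp ((t - 1) ^ 2 / 8))]
          rw [show Real.exp (-(t - 1) ^ 2 / 8) * (Real.exp ((t - 1) ^ 2 / 8) * 110592 / 8)
              = (Real.exp (-(t - 1) ^ 2 / 8) * Real.exp ((t - 1) ^ 2 / 8)) * 13824 by ring,
            hexp, one_mul]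
  have hterm1 : CN * (r ^ 3 * (r ^ α * I1)) ≤ A * jb v ^ α := by
    have e1 : CN * (r ^ 3 * (r ^ α * I1)) = (CN * r ^ 3) * (r ^ α * I1) := by ring
    rw [e1]
    have e2 : (CN * r ^ 3) * (r ^ α * I1) ≤ (K * Real.exp 1 * 13824) * (r ^ α * I1) := by
      apply mul_le_mul_of_nonneg_right hCN3 (mul_nonneg hrα0 hI1nn)
    refine e2.trans ?_
    have e3 : r ^ α * I1 ≤ (2 ^ (-α) * jb v ^ α) * I1 :=
      mul_le_mul_of_nonneg_right hrα hI1nn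
    have e4 := mul_le_mul_of_nonneg_left e3 (by positivity : (0:ℝ) ≤ K * Real.exp 1 * 13824)
    refine e4.trans_eq ?_
    rw [hA]; ring
  have hterm2 : r ^ α * M0 ≤ B * jb v ^ α := by
    have := mul_le_mul_of_nonneg_right hrα hM0nn
    refine this.trans_eq ?_
    rw [hB]; ring
  rw [← hI1, ← hM0] at key
  have hsum : A * jb v ^ α + B * jb v ^ α + jb v ^ α = (A + B + 1) * jb v ^ α := by ring
  calc (∫ w : R3, ‖v - w‖ ^ α * mu w)
      ≤ CN * (r ^ 3 * (r ^ α * I1)) + r ^ α * M0 := key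
    _ ≤ A * jb v ^ α + B * jb v ^ α := add_le_add hterm1 hterm2
    _ ≤ (A + B + 1) * jb v ^ α := by linarith
end
end

section
/- Let γ ∈ [−2,1], ā_{ij}(v) = (a_{ij}*μ)(v) with a_{ij}(z) = |z|^{γ+2}(δ_{ij} − z_i z_j/|z|²) and μ the standard Gaussian on ℝ³, and ℓ₁(v), ℓ₂(v) the eigenvalues of ā(v) on span{v} and v^⊥. Then there exists c₀ > 0 such that for all v, ξ ∈ ℝ³: ā_{ij}(v) ξ_i ξ_j = ℓ₁(v)|P_v ξ|² + ℓ₂(v)|(I−P_v)ξ|² ≥ c₀ ( ⟨v⟩^γ |P_v ξ|² + ⟨v⟩^{γ+2} |(I−P_v)ξ|² ), where P_v is the orthogonal projection onto v. -/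
open MeasureTheory Real

noncomputable section

/-- The Landau collision matrix a_{ij}(v) = |v|^{γ+2} (δ_{ij} - v_i v_j / |v|²). -/
def aMat (γ : ℝ) (v : R3) (i j : Fin 3) : ℝ :=
  ‖v‖ ^ (γ + 2) * ((if i = j then (1:ℝ) else 0) - v i * v j / ‖v‖ ^ 2)

/-- ā_{ij} = a_{ij} * μ. -/
def abar (γ : ℝ) (v : R3) (i j : Fin 3) : ℝ := ∫ w : R3, aMat γ (v - w) i j * mu w

/-- dot product as component sum -/
def dt (x y : R3) : ℝ := ∑ i, x i * y i

lemma dt_inner (x y : R3) : dt x y = (inner ℝ x y : ℝ) := by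
  simp [dt, PiLp.inner_apply, RCLike.inner_apply, mul_comm]

lemma dt_comm (x y : R3) : dt x y = dt y x := by
  simp [dt, mul_comm]

lemma norm_sq_eq_dt (x : R3) : ‖x‖ ^ 2 = dt x x := by
  rw [dt_inner, real_inner_self_eq_norm_sq]

lemma norm_sq_eq_sum (x : R3) : ‖x‖ ^ 2 = ∑ i, x i ^ 2 := by
  rw [norm_sq_eq_dt, dt]; exact Finset.sum_congr rfl fun i _ => (sq (x i)).symm

lemma abs_dt_le (x y : R3) : |dt x y| ≤ ‖x‖ * ‖y‖ := by
  rw [dt_inner]; exact abs_real_inner_le_norm x y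

lemma dt_sub_left (x y z : R3) : dt (x - y) z = dt x z - dt y z := by
  simp [dt, Finset.sum_sub_distrib, sub_mul]

lemma dt_smul_left (c : ℝ) (x y : R3) : dt (c • x) y = c * dt x y := by
  simp [dt, Finset.mul_sum, mul_assoc]

lemma dt_smul_right (c : ℝ) (x y : R3) : dt x (c • y) = c * dt x y := by
  rw [dt_comm, dt_smul_left, dt_comm]

lemma abs_apply_le_norm (x : R3) (i : Fin 3) : |x i| ≤ ‖x‖ := by
  have h1 : x i ^ 2 ≤ ‖x‖ ^ 2 := by
    rw [norm_sq_eq_sum]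
    exact Finset.single_le_sum (fun j _ => sq_nonneg (x j)) (Finset.mem_univ i)
  calc |x i| = Real.sqrt (x i ^ 2) := (Real.sqrt_sq_eq_abs _).symm
    _ ≤ Real.sqrt (‖x‖ ^ 2) := Real.sqrt_le_sqrt h1
    _ = ‖x‖ := Real.sqrt_sq (norm_nonneg x)

lemma mu_pos (w : R3) : 0 < mu w :=
  mul_pos (Real.rpow_pos_of_pos (by positivity) _) (Real.exp_pos _)

lemma mu_continuous : Continuous mu :=
  continuous_const.mul (((continuous_norm.pow 2).neg.div_const 2).rexp)

lemma jb_pos (v : R3) : 0 < jb v := Real.sqrt_pos.2 (by positivity)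

lemma one_le_jb (v : R3) : 1 ≤ jb v := by
  rw [show (1:ℝ) = Real.sqrt 1 by simp [Real.sqrt_one]]
  exact Real.sqrt_le_sqrt (by nlinarith [sq_nonneg ‖v‖])

lemma norm_le_jb (v : R3) : ‖v‖ ≤ jb v := by
  calc ‖v‖ = Real.sqrt (‖v‖ ^ 2) := (Real.sqrt_sq (norm_nonneg v)).symm
    _ ≤ jb v := Real.sqrt_le_sqrt (by nlinarith)

lemma jb_le_one_add_norm (v : R3) : jb v ≤ 1 + ‖v‖ := by
  rw [show (1 + ‖v‖ : ℝ) = Real.sqrt ((1 + ‖v‖)^2) from (Real.sqrt_sq (by positivity)).symm]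
  exact Real.sqrt_le_sqrt (by nlinarith [norm_nonneg v])

/-- quadratic form of aMat -/
def Q (γ : ℝ) (z ξ : R3) : ℝ := ∑ i, ∑ j, aMat γ z i j * ξ i * ξ j

lemma Q_formula (γ : ℝ) (z ξ : R3) :
    Q γ z ξ = ‖z‖ ^ (γ + 2) * ((∑ i, ξ i ^ 2) - (dt z ξ) ^ 2 / ‖z‖ ^ 2) := by
  simp only [Q, aMat, dt, Fin.sum_univ_three]
  norm_num [Fin.ext_iff]
  ring

lemma Q_nonneg (γ : ℝ) (z ξ : R3) : 0 ≤ Q γ z ξ := by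
  rw [Q_formula]
  apply mul_nonneg (Real.rpow_nonneg (norm_nonneg z) _)
  rcases eq_or_ne ‖z‖ 0 with h | h
  · have hz : z = 0 := norm_eq_zero.1 h
    subst hz
    have : dt (0:R3) ξ = 0 := by simp [dt]
    rw [this]
    simp
    positivity
  · have h2 : (0:ℝ) < ‖z‖ ^ 2 := by positivity
    rw [sub_nonneg, div_le_iff₀ h2]
    have := abs_dt_le z ξ
    have h3 : (dt z ξ)^2 ≤ (‖z‖ * ‖ξ‖)^2 := by
      rw [← sq_abs]
      exact pow_le_pow_left₀ (abs_nonneg _) this 2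
    calc (dt z ξ)^2 ≤ (‖z‖*‖ξ‖)^2 := h3
      _ = ‖ξ‖^2 * ‖z‖^2 := by ring
      _ = (∑ i, ξ i ^2) * ‖z‖^2 := by rw [norm_sq_eq_sum]

lemma Q_formula' (γ : ℝ) {z : R3} (ξ : R3) (hz : z ≠ 0) :
    Q γ z ξ = ‖z‖ ^ γ * (‖z‖ ^ 2 * ‖ξ‖ ^ 2 - (dt z ξ) ^ 2) := by
  have h0 : (0:ℝ) < ‖z‖ := norm_pos_iff.2 hz
  rw [Q_formula, ← norm_sq_eq_sum]
  rw [show (γ + 2 : ℝ) = γ + (2:ℕ) by norm_num, Real.rpow_add h0, Real.rpow_natCast]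
  field_simp

lemma rpow_ratio {a b s : ℝ} (hb : 0 < b) (h1 : (1/16) * b ≤ a) (h2 : a ≤ 2 * b)
    (hs1 : -2 ≤ s) (hs2 : s ≤ 3) : (1/4096) * b ^ s ≤ a ^ s := by
  have ha : 0 < a := lt_of_lt_of_le (by positivity) h1
  have hr : a = b * (a / b) := by field_simp
  have hrpos : 0 < a / b := div_pos ha hb
  have hab : a ^ s = b ^ s * (a / b) ^ s := by
    rw [← Real.mul_rpow hb.le hrpos.le, ← hr]
  rw [hab]
  have hbs : (0:ℝ) < b ^ s := Real.rpow_pos_of_pos hb s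
  have hlow : (1/16 : ℝ) ≤ a / b := by rw [le_div_iff₀ hb]; linarith
  have hhigh : a / b ≤ 2 := by rw [div_le_iff₀ hb]; linarith
  have key : (1/4096 : ℝ) ≤ (a / b) ^ s := by
    rcases le_or_gt 0 s with hs | hs
    · have t1 : ((1:ℝ)/16) ^ s ≤ (a/b) ^ s := Real.rpow_le_rpow (by norm_num) hlow hs
      have t2 : ((1:ℝ)/16) ^ (3:ℝ) ≤ ((1:ℝ)/16) ^ s :=
        Real.rpow_le_rpow_of_exponent_ge (by norm_num) (by norm_num) hs2
      have t3 : ((1:ℝ)/16) ^ (3:ℝ) = 1/4096 := by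
        rw [show (3:ℝ) = ((3:ℕ):ℝ) by norm_num, Real.rpow_natCast]; norm_num
      linarith
    · have t1 : (a/b) ^ s ≥ (2:ℝ) ^ s := Real.rpow_le_rpow_of_nonpos hrpos hhigh hs.le
      have t2 : (2:ℝ) ^ (-2:ℝ) ≤ (2:ℝ) ^ s :=
        Real.rpow_le_rpow_of_exponent_le (by norm_num) hs1
      have t3 : (2:ℝ) ^ (-2:ℝ) = 1/4 := by
        rw [show (-2:ℝ) = ((-2:ℤ):ℝ) by norm_num, Real.rpow_intCast]; norm_num
      calc (1/4096:ℝ) ≤ 1/4 := by norm_num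
        _ = (2:ℝ) ^ (-2:ℝ) := t3.symm
        _ ≤ (2:ℝ) ^ s := t2
        _ ≤ (a/b) ^ s := t1
  calc (1/4096) * b ^ s ≤ (a/b)^s * b ^ s :=
        mul_le_mul_of_nonneg_right key hbs.le
    _ = b ^ s * (a/b) ^ s := by ring

/-- Geometry of the ball B(e/4, 1/32) with e a unit vector orthogonal to v. -/
lemma geom {v e : R3} (he : ‖e‖ = 1) (hve : dt v e = 0) {w : R3}
    (hw : w ∈ Metric.ball ((1/4:ℝ) • e) (1/32)) :
    7/32 ≤ ‖v - w‖ ∧ ‖w‖ ≤ 9/32 ∧ 7/32 ≤ ‖w‖ ∧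
    (1/16) * jb v ≤ ‖v - w‖ ∧ ‖v - w‖ ≤ 2 * jb v ∧
    (∀ x : R3, ‖x‖ = 1 → dt x e = 0 → |dt w x| ≤ 1/32) := by
  rw [Metric.mem_ball, dist_eq_norm] at hw
  set u := w - (1/4:ℝ) • e with hu
  have hwu : w = u + (1/4:ℝ) • e := by rw [hu]; abel
  have hun : ‖u‖ ≤ 1/32 := le_of_lt hw
  -- dot of w with e
  have hdue : |dt u e| ≤ 1/32 := by
    calc |dt u e| ≤ ‖u‖ * ‖e‖ := abs_dt_le u e
      _ ≤ 1/32 := by rw [he]; simpa using hun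
  have hdee : dt e e = 1 := by rw [← norm_sq_eq_dt, he]; norm_num
  have hdwe : dt w e = dt u e + 1/4 := by
    rw [hwu, show dt (u + (1/4:ℝ) • e) e = dt u e + dt ((1/4:ℝ)•e) e by
      simp [dt, Finset.sum_add_distrib, add_mul], dt_smul_left, hdee]; ring
  have hdwe_lb : 7/32 ≤ dt w e := by
    have := abs_le.1 hdue
    rw [hdwe]; linarith [this.1]
  have hwn_ub : ‖w‖ ≤ 9/32 := by
    calc ‖w‖ = ‖u + (1/4:ℝ) • e‖ := by rw [← hwu]
      _ ≤ ‖u‖ + ‖(1/4:ℝ) • e‖ := norm_add_le _ _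
      _ ≤ 1/32 + 1/4 := by
          rw [norm_smul, he]; simp; linarith
      _ = 9/32 := by norm_num
  have hwn_lb : 7/32 ≤ ‖w‖ := by
    calc (7/32:ℝ) ≤ dt w e := hdwe_lb
      _ ≤ |dt w e| := le_abs_self _
      _ ≤ ‖w‖ * ‖e‖ := abs_dt_le w e
      _ = ‖w‖ := by rw [he, mul_one]
  have hvw_lb : 7/32 ≤ ‖v - w‖ := by
    have h1 : |dt (v - w) e| ≤ ‖v - w‖ := by
      have := abs_dt_le (v - w) e; rwa [he, mul_one] at this
    have h2 : dt (v - w) e = -dt w e := by rw [dt_sub_left, hve]; ring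
    calc (7/32:ℝ) ≤ dt w e := hdwe_lb
      _ ≤ |dt w e| := le_abs_self _
      _ = |dt (v - w) e| := by rw [h2, abs_neg]
      _ ≤ ‖v - w‖ := h1
  have hvw_ub : ‖v - w‖ ≤ ‖v‖ + 9/32 := by
    calc ‖v - w‖ ≤ ‖v‖ + ‖w‖ := norm_sub_le v w
      _ ≤ ‖v‖ + 9/32 := by linarith
  have hvw_lb2 : ‖v‖ - 9/32 ≤ ‖v - w‖ := by
    linarith [norm_sub_norm_le v w]
  have hjb1 : 1 ≤ jb v := one_le_jb v
  have hjb2 : ‖v‖ ≤ jb v := norm_le_jb v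
  have hjb3 : jb v ≤ 1 + ‖v‖ := jb_le_one_add_norm v
  refine ⟨hvw_lb, hwn_ub, hwn_lb, ?_, ?_, ?_⟩
  · rcases le_total ‖v‖ (5/2 : ℝ) with hv | hv
    · calc (1/16) * jb v ≤ (1/16) * (1 + ‖v‖) := by linarith
        _ ≤ 7/32 := by linarith
        _ ≤ ‖v - w‖ := hvw_lb
    · calc (1/16) * jb v ≤ (1/16) * (1 + ‖v‖) := by linarith
        _ ≤ ‖v‖ - 9/32 := by linarith
        _ ≤ ‖v - w‖ := hvw_lb2
  · calc ‖v - w‖ ≤ ‖v‖ + 9/32 := hvw_ub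
      _ ≤ jb v + (9/32) * jb v := by nlinarith
      _ ≤ 2 * jb v := by linarith
  · intro x hx hxe
    have : dt w x = dt u x + (1/4) * dt e x := by
      rw [hwu, show dt (u + (1/4:ℝ) • e) x = dt u x + dt ((1/4:ℝ)•e) x by
        simp [dt, Finset.sum_add_distrib, add_mul], dt_smul_left]
    rw [this, dt_comm e x, hxe]
    calc |dt u x + (1/4) * 0| = |dt u x| := by norm_num
      _ ≤ ‖u‖ * ‖x‖ := abs_dt_le u x
      _ ≤ 1/32 := by rw [hx]; simpa using hun

lemma integrable_gauss4 : Integrable (fun w : R3 => rexp (-(1/4) * ‖w‖^2)) := by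
  have h := GaussianFourier.integrable_cexp_neg_mul_sq_norm_add (V := R3) (b := (1/4:ℂ))
    (by norm_num) 0 (0 : R3)
  simp only [zero_mul, add_zero] at h
  refine h.re.congr (Filter.Eventually.of_forall fun w => ?_)
  show (Complex.exp (-(1/4:ℂ) * (‖w‖:ℂ)^2)).re = _
  have : (-(1/4:ℂ) * (‖w‖:ℂ)^2) = ((-(1/4) * ‖w‖^2 : ℝ) : ℂ) := by push_cast; ring
  rw [this, ← Complex.ofReal_exp, Complex.ofReal_re]

lemma aMat_abs_le (γ : ℝ) (z : R3) (i j : Fin 3) :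
    |aMat γ z i j| ≤ 2 * ‖z‖ ^ (γ + 2) := by
  unfold aMat
  have h0 : (0:ℝ) ≤ ‖z‖ ^ (γ+2) := Real.rpow_nonneg (norm_nonneg z) _
  rw [abs_mul, abs_of_nonneg h0, mul_comm]
  apply mul_le_mul_of_nonneg_right _ h0
  have hzz : |z i * z j / ‖z‖^2| ≤ 1 := by
    rcases eq_or_ne ‖z‖ 0 with h | h
    · have : z = 0 := norm_eq_zero.1 h
      subst this; simp
    · have h2 : (0:ℝ) < ‖z‖^2 := by positivity
      rw [abs_div, abs_of_nonneg h2.le, div_le_one h2, abs_mul]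
      calc |z i| * |z j| ≤ ‖z‖ * ‖z‖ :=
            mul_le_mul (abs_apply_le_norm z i) (abs_apply_le_norm z j) (abs_nonneg _) (norm_nonneg _)
        _ = ‖z‖^2 := (sq ‖z‖).symm
  have := abs_sub (if i = j then (1:ℝ) else 0) (z i * z j / ‖z‖^2)
  have h1 : |if i = j then (1:ℝ) else 0| ≤ 1 := by split <;> norm_num
  calc |(if i = j then (1:ℝ) else 0) - z i * z j / ‖z‖^2|
      ≤ |if i = j then (1:ℝ) else 0| + |z i * z j / ‖z‖^2| := abs_sub _ _
    _ ≤ 2 := by linarith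

lemma rpow_le_gauss_bound {t : ℝ} (ht0 : 0 ≤ t) (ht3 : t ≤ 3) (c x : ℝ) (hc : 0 ≤ c)
    (hx : 0 ≤ x) : (c + x) ^ t ≤ 1 + rexp (3 * c + 3 * x) := by
  rcases le_total (c + x) 1 with h | h
  · have := Real.rpow_le_one (by positivity) h ht0
    have := Real.exp_nonneg (3*c + 3*x)
    linarith
  · have h1 : (c+x) ^ t ≤ (c+x) ^ (3:ℝ) := Real.rpow_le_rpow_of_exponent_le h ht3
    have h2 : (c+x) ^ (3:ℝ) ≤ (rexp (c+x)) ^ (3:ℝ) := by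
      apply Real.rpow_le_rpow (by positivity) _ (by norm_num)
      linarith [Real.add_one_le_exp (c+x)]
    have h3 : (rexp (c+x)) ^ (3:ℝ) = rexp (3*c + 3*x) := by
      rw [← Real.exp_mul]; ring_nf
    have := Real.exp_nonneg (3*c+3*x)
    nlinarith

lemma measurable_aMat_mu {γ : ℝ} (hγ1 : -2 ≤ γ) (v : R3) (i j : Fin 3) :
    Measurable (fun w : R3 => aMat γ (v - w) i j * mu w) := by
  have hsub : Continuous (fun w : R3 => v - w) := continuous_const.sub continuous_id
  have hnorm : Measurable (fun w : R3 => ‖v - w‖) := hsub.norm.measurable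
  have happ : ∀ k : Fin 3, Measurable (fun w : R3 => (v - w) k) := by
    intro k
    exact ((EuclideanSpace.proj (𝕜 := ℝ) k).continuous.comp hsub).measurable
  have hrpow : Measurable (fun w : R3 => ‖v - w‖ ^ (γ + 2)) :=
    ((Real.continuous_rpow_const (by linarith)).comp hsub.norm).measurable
  unfold aMat
  exact ((hrpow.mul ((measurable_const.sub (((happ i).mul (happ j)).div
    (hnorm.pow_const 2))))).mul mu_continuous.measurable)

lemma integrable_aMat_mu {γ : ℝ} (hγ : γ ∈ Set.Icc (-2:ℝ) 1) (v : R3) (i j : Fin 3) :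
    Integrable (fun w : R3 => aMat γ (v - w) i j * mu w) := by
  obtain ⟨hγ1, hγ2⟩ := hγ
  set Cg : ℝ := (2 * π) ^ (-(3:ℝ)/2) with hCg
  have hCg0 : 0 < Cg := Real.rpow_pos_of_pos (by positivity) _
  set K : ℝ := 2 * Cg * (1 + rexp (3 * ‖v‖ + 9)) with hK
  have hK0 : 0 ≤ K := by positivity
  refine Integrable.mono' (g := fun w => K * rexp (-(1/4) * ‖w‖^2))
    (integrable_gauss4.const_mul K) (measurable_aMat_mu hγ1 v i j).aestronglyMeasurable
    (Filter.Eventually.of_forall fun w => ?_)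
  have hmu : mu w = Cg * rexp (-‖w‖^2/2) := rfl
  have hmu0 : 0 < mu w := mu_pos w
  rw [Real.norm_eq_abs, abs_mul, abs_of_nonneg hmu0.le]
  have h1 : |aMat γ (v - w) i j| ≤ 2 * ‖v - w‖ ^ (γ+2) := aMat_abs_le γ (v - w) i j
  have h2 : ‖v - w‖ ^ (γ+2) ≤ (‖v‖ + ‖w‖) ^ (γ+2) + 1 + rexp (3*‖v‖ + 3*‖w‖) -
      (‖v‖ + ‖w‖) ^ (γ+2) := by
    have := rpow_le_gauss_bound (t := γ+2) (by linarith) (by linarith) ‖v‖ ‖w‖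
      (norm_nonneg v) (norm_nonneg w)
    have hmono : ‖v - w‖ ^ (γ+2) ≤ (‖v‖ + ‖w‖) ^ (γ+2) :=
      Real.rpow_le_rpow (norm_nonneg _) (norm_sub_le v w) (by linarith)
    linarith
  have h2' : ‖v - w‖ ^ (γ+2) ≤ 1 + rexp (3*‖v‖ + 3*‖w‖) := by linarith
  calc |aMat γ (v - w) i j| * mu w
      ≤ (2 * (1 + rexp (3*‖v‖ + 3*‖w‖))) * mu w := by
        apply mul_le_mul_of_nonneg_right _ hmu0.le
        calc |aMat γ (v - w) i j| ≤ 2 * ‖v - w‖ ^ (γ+2) := h1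
          _ ≤ 2 * (1 + rexp (3*‖v‖ + 3*‖w‖)) := by linarith
    _ = 2 * Cg * rexp (-‖w‖^2/2) + 2 * Cg * (rexp (3*‖v‖ + 3*‖w‖) * rexp (-‖w‖^2/2)) := by
        rw [hmu]; ring
    _ ≤ 2 * Cg * rexp (-(1/4) * ‖w‖^2) +
          2 * Cg * (rexp (3*‖v‖ + 9) * rexp (-(1/4) * ‖w‖^2)) := by
        have e1 : rexp (-‖w‖^2/2) ≤ rexp (-(1/4)*‖w‖^2) := by
          apply Real.exp_le_exp.2; nlinarith [sq_nonneg ‖w‖]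
        have e2 : rexp (3*‖v‖ + 3*‖w‖) * rexp (-‖w‖^2/2) ≤
            rexp (3*‖v‖ + 9) * rexp (-(1/4)*‖w‖^2) := by
          rw [← Real.exp_add, ← Real.exp_add]
          apply Real.exp_le_exp.2; nlinarith [sq_nonneg (‖w‖/2 - 3)]
        have h2Cg : (0:ℝ) ≤ 2 * Cg := by positivity
        exact add_le_add (mul_le_mul_of_nonneg_left e1 h2Cg)
          (mul_le_mul_of_nonneg_left e2 h2Cg)
    _ = K * rexp (-(1/4) * ‖w‖^2) := by rw [hK]; ring

lemma Qmu_eq_sum (γ : ℝ) (v ξ : R3) (w : R3) :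
    Q γ (v - w) ξ * mu w = ∑ i, ∑ j, (aMat γ (v - w) i j * mu w) * (ξ i * ξ j) := by
  rw [Q, Finset.sum_mul]
  refine Finset.sum_congr rfl fun i _ => ?_
  rw [Finset.sum_mul]
  exact Finset.sum_congr rfl fun j _ => by ring

lemma integrable_Q_mu {γ : ℝ} (hγ : γ ∈ Set.Icc (-2:ℝ) 1) (v ξ : R3) :
    Integrable (fun w : R3 => Q γ (v - w) ξ * mu w) := by
  have : (fun w : R3 => Q γ (v - w) ξ * mu w) =
      (fun w => ∑ i, ∑ j, (aMat γ (v - w) i j * mu w) * (ξ i * ξ j)) := by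
    funext w; exact Qmu_eq_sum γ v ξ w
  rw [this]
  apply integrable_finset_sum
  intro i _
  apply integrable_finset_sum
  intro j _
  exact (integrable_aMat_mu hγ v i j).mul_const _

lemma S_repr {γ : ℝ} (hγ : γ ∈ Set.Icc (-2:ℝ) 1) (v ξ : R3) :
    ∑ i, ∑ j, abar γ v i j * ξ i * ξ j = ∫ w : R3, Q γ (v - w) ξ * mu w := by
  have step : ∀ i j : Fin 3, abar γ v i j * ξ i * ξ j =
      ∫ w : R3, (aMat γ (v - w) i j * mu w) * (ξ i * ξ j) := by
    intro i j
    rw [integral_mul_const, abar, mul_assoc]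
  calc ∑ i, ∑ j, abar γ v i j * ξ i * ξ j
      = ∑ i, ∑ j, ∫ w : R3, (aMat γ (v - w) i j * mu w) * (ξ i * ξ j) := by
        exact Finset.sum_congr rfl fun i _ => Finset.sum_congr rfl fun j _ => step i j
    _ = ∑ i, ∫ w : R3, ∑ j, (aMat γ (v - w) i j * mu w) * (ξ i * ξ j) := by
        refine Finset.sum_congr rfl fun i _ => ?_
        rw [integral_finset_sum]
        exact fun j _ => (integrable_aMat_mu hγ v i j).mul_const _
    _ = ∫ w : R3, ∑ i, ∑ j, (aMat γ (v - w) i j * mu w) * (ξ i * ξ j) := by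
        rw [integral_finset_sum]
        exact fun i _ => integrable_finset_sum _
          (fun j _ => (integrable_aMat_mu hγ v i j).mul_const _)
    _ = ∫ w : R3, Q γ (v - w) ξ * mu w := by
        refine integral_congr_ae (Filter.Eventually.of_forall fun w => ?_)
        exact (Qmu_eq_sum γ v ξ w).symm

/-- Lower bound for an integral of a nonneg function bounded below on a ball. -/
lemma ball_lb {f : R3 → ℝ} (hf : Integrable f) (hnn : ∀ w, 0 ≤ f w) {c : ℝ}
    (x₀ : R3) {r : ℝ} (hr : 0 < r) (hc : ∀ w ∈ Metric.ball x₀ r, c ≤ f w) :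
    c * (volume (Metric.ball (0:R3) r)).toReal ≤ ∫ w, f w := by
  have hmeas : MeasurableSet (Metric.ball x₀ r) := measurableSet_ball
  have hfin : volume (Metric.ball x₀ r) < ⊤ := measure_ball_lt_top
  have h1 : ∫ w in Metric.ball x₀ r, f w ≤ ∫ w, f w :=
    setIntegral_le_integral hf (Filter.Eventually.of_forall hnn)
  have h2 : ∫ w in Metric.ball x₀ r, (c : ℝ) ≤ ∫ w in Metric.ball x₀ r, f w := by
    apply setIntegral_mono_on (integrableOn_const hfin.ne) hf.integrableOn hmeas
    exact hc
  have h3 : ∫ w in Metric.ball x₀ r, (c : ℝ) =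
      c * (volume (Metric.ball (0:R3) r)).toReal := by
    rw [setIntegral_const, measureReal_def, Measure.addHaar_ball_center]
    rw [smul_eq_mul, mul_comm]
  linarith [h3 ▸ h2]

/-- volume of small ball, positive -/
lemma vol_pos (r : ℝ) (hr : 0 < r) : 0 < (volume (Metric.ball (0:R3) r)).toReal :=
  ENNReal.toReal_pos (Metric.measure_ball_pos volume 0 hr).ne' measure_ball_lt_top.ne

/-- Existence of an orthonormal pair orthogonal to v. -/
lemma exists_perp (v : R3) : ∃ e f : R3, ‖e‖ = 1 ∧ ‖f‖ = 1 ∧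
    dt v e = 0 ∧ dt v f = 0 ∧ dt e f = 0 := by
  classical
  set K := (ℝ ∙ v)ᗮ with hK
  have hrank : 1 < Module.finrank ℝ K := by
    have h1 : Module.finrank ℝ (ℝ ∙ v) ≤ 1 := by
      rcases eq_or_ne v 0 with rfl | hv
      · rw [Submodule.span_zero_singleton]; simp
      · rw [finrank_span_singleton hv]
    have h2 : Module.finrank ℝ (ℝ ∙ v) + Module.finrank ℝ K = 3 := by
      rw [hK, Submodule.finrank_add_finrank_orthogonal]
      simp [finrank_euclideanSpace]
    omega
  let b := stdOrthonormalBasis ℝ K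
  have h0 : (0 : ℕ) < Module.finrank ℝ K := by omega
  let e : K := b ⟨0, h0⟩
  let f : K := b ⟨1, hrank⟩
  have hortho := b.orthonormal
  refine ⟨(e : R3), (f : R3), ?_, ?_, ?_, ?_, ?_⟩
  · have := hortho.1 ⟨0, h0⟩
    exact this
  · have := hortho.1 ⟨1, hrank⟩
    exact this
  · rw [dt_inner]
    exact e.2 v (Submodule.mem_span_singleton_self v)
  · rw [dt_inner]
    exact f.2 v (Submodule.mem_span_singleton_self v)
  · rw [dt_inner]
    have := hortho.2 (i := ⟨0, h0⟩) (j := ⟨1, hrank⟩) (by simp)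
    exact this

def m₀ : ℝ := (2 * π) ^ (-(3:ℝ)/2) * rexp (-1/2)

def Vol : ℝ := (volume (Metric.ball (0:R3) (1/32))).toReal

lemma m₀_pos : 0 < m₀ := mul_pos (Real.rpow_pos_of_pos (by positivity) _) (Real.exp_pos _)

lemma Vol_pos : 0 < Vol := vol_pos (1/32) (by norm_num)

lemma mu_ge {w : R3} (hw : ‖w‖ ≤ 1) : m₀ ≤ mu w := by
  unfold m₀ mu
  apply mul_le_mul_of_nonneg_left _ (Real.rpow_nonneg (by positivity) _)
  apply Real.exp_le_exp.2
  nlinarith [norm_nonneg w]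

lemma eig_core {γ : ℝ} (hγ : γ ∈ Set.Icc (-2:ℝ) 1) (v ξ : R3) {c : ℝ} (hc : 0 ≤ c)
    {e : R3} (he : ‖e‖ = 1)
    (hlb : ∀ w ∈ Metric.ball ((1/4:ℝ) • e) (1/32:ℝ), c ≤ Q γ (v - w) ξ) :
    c * (m₀ * Vol) ≤ ∑ i, ∑ j, abar γ v i j * ξ i * ξ j := by
  rw [S_repr hγ]
  have key : (c * m₀) * (volume (Metric.ball (0:R3) (1/32))).toReal ≤
      ∫ w, Q γ (v - w) ξ * mu w := by
    apply ball_lb (integrable_Q_mu hγ v ξ)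
      (fun w => mul_nonneg (Q_nonneg _ _ _) (mu_pos w).le) ((1/4:ℝ) • e) (by norm_num)
    intro w hw
    have hwn : ‖w‖ ≤ 1 := by
      rw [Metric.mem_ball, dist_eq_norm] at hw
      have h1 : ‖w‖ ≤ ‖w - (1/4:ℝ) • e‖ + ‖(1/4:ℝ) • e‖ := by
        have := norm_add_le (w - (1/4:ℝ) • e) ((1/4:ℝ) • e)
        simpa using this
      have h2 : ‖(1/4:ℝ) • e‖ = 1/4 := by rw [norm_smul, he]; simp
      linarith
    calc c * m₀ ≤ Q γ (v - w) ξ * mu w :=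
          mul_le_mul (hlb w hw) (mu_ge hwn) m₀_pos.le
            (le_trans hc (hlb w hw))
      _ = Q γ (v - w) ξ * mu w := rfl
  calc c * (m₀ * Vol) = (c * m₀) * (volume (Metric.ball (0:R3) (1/32))).toReal := by
        rw [Vol]; ring
    _ ≤ _ := key

lemma rpow_split {z : ℝ} (hz : 0 < z) (γ : ℝ) : z ^ (γ + 2) = z ^ γ * z ^ 2 := by
  rw [show (γ + 2 : ℝ) = γ + (2:ℕ) by norm_num, Real.rpow_add hz, Real.rpow_natCast]

open Classical in
/-- Orthogonal projection onto the direction of `v` (zero if `v = 0`). -/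
def projv (v ξ : R3) : R3 := if v = 0 then 0 else ((∑ j, ξ j * v j) / ‖v‖ ^ 2) • v

set_option maxHeartbeats 1000000 in
theorem stmt17 (γ : ℝ) (hγ : γ ∈ Set.Icc (-2:ℝ) 1) (ℓ₁ ℓ₂ : R3 → ℝ)
    (hpos1 : ∀ v, 0 < ℓ₁ v) (hpos2 : ∀ v, 0 < ℓ₂ v)
    (h1 : ∀ (v : R3) (i : Fin 3), ∑ j, abar γ v i j * v j = ℓ₁ v * v i)
    (h2 : ∀ (v ξ : R3), (∑ j, ξ j * v j) = 0 →
            ∀ i, ∑ j, abar γ v i j * ξ j = ℓ₂ v * ξ i) :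
    ∃ c₀ : ℝ, 0 < c₀ ∧ ∀ (v ξ : R3),
      (∑ i, ∑ j, abar γ v i j * ξ i * ξ j
          = ℓ₁ v * ‖projv v ξ‖ ^ 2 + ℓ₂ v * ‖ξ - projv v ξ‖ ^ 2) ∧
      c₀ * (jb v ^ γ * ‖projv v ξ‖ ^ 2 + jb v ^ (γ + 2) * ‖ξ - projv v ξ‖ ^ 2)
        ≤ ∑ i, ∑ j, abar γ v i j * ξ i * ξ j := by
  classical
  set C1 : ℝ := (3/64) * (1/4096) * (m₀ * Vol) with hC1
  have hC1pos : 0 < C1 := by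
    have hm := m₀_pos; have hV := Vol_pos
    rw [hC1]; positivity
  -- lower bound for ℓ₁
  have ell1 : ∀ v : R3, v ≠ 0 → C1 * jb v ^ γ ≤ ℓ₁ v := by
    intro v hv
    obtain ⟨e, f, he, hf, hve, hvf, hef⟩ := exists_perp v
    have hS : ∑ i, ∑ j, abar γ v i j * v i * v j = ℓ₁ v * ‖v‖ ^ 2 := by
      calc ∑ i, ∑ j, abar γ v i j * v i * v j
          = ∑ i, (∑ j, abar γ v i j * v j) * v i := by
            refine Finset.sum_congr rfl fun i _ => ?_
            rw [Finset.sum_mul]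
            exact Finset.sum_congr rfl fun j _ => by ring
        _ = ∑ i, (ℓ₁ v * v i) * v i :=
            Finset.sum_congr rfl fun i _ => by rw [h1 v i]
        _ = ℓ₁ v * ∑ i, v i * v i := by
            rw [Finset.mul_sum]
            exact Finset.sum_congr rfl fun i _ => by ring
        _ = ℓ₁ v * ‖v‖ ^ 2 := by rw [norm_sq_eq_dt]; rfl
    have hvpos : (0:ℝ) < ‖v‖ := norm_pos_iff.2 hv
    have hjb : 0 < jb v := jb_pos v
    have hcore : ((1/4096) * jb v ^ γ * ((3/64) * ‖v‖^2)) * (m₀ * Vol)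
        ≤ ℓ₁ v * ‖v‖ ^ 2 := by
      rw [← hS]
      refine eig_core hγ v v ?_ he ?_
      · apply mul_nonneg (mul_nonneg (by norm_num) (Real.rpow_nonneg hjb.le γ))
        positivity
      · intro w hw
        obtain ⟨g1, g2, g3, g4, g5, g6⟩ := geom he hve hw
        have hz : v - w ≠ 0 := by
          intro h; rw [h, norm_zero] at g1; norm_num at g1
        rw [Q_formula' γ v hz]
        have hA : (1/4096) * jb v ^ γ ≤ ‖v - w‖ ^ γ :=
          rpow_ratio hjb g4 g5 hγ.1 (by linarith [hγ.2])
        have hx : ‖(‖v‖⁻¹ • v : R3)‖ = 1 := norm_smul_inv_norm hv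
        have hxe : dt (‖v‖⁻¹ • v) e = 0 := by rw [dt_smul_left, hve, mul_zero]
        have hdw := g6 _ hx hxe
        rw [dt_smul_right] at hdw
        have hdwv : |dt w v| ≤ ‖v‖ * (1/32) := by
          rw [abs_mul, abs_inv, abs_of_pos hvpos] at hdw
          calc |dt w v| = ‖v‖ * (‖v‖⁻¹ * |dt w v|) := by field_simp
            _ ≤ ‖v‖ * (1/32) := mul_le_mul_of_nonneg_left hdw hvpos.le
        have h7 : ((7:ℝ)/32)^2 ≤ ‖w‖^2 := pow_le_pow_left₀ (by norm_num) g3 2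
        have h8 : (dt w v)^2 ≤ (‖v‖ * (1/32))^2 :=
          sq_le_sq' (abs_le.1 hdwv).1 (abs_le.1 hdwv).2
        have hD : (3/64) * ‖v‖^2 ≤ ‖v - w‖^2 * ‖v‖^2 - (dt (v - w) v)^2 := by
          have e1 : dt (v - w) v = dt v v - dt w v := dt_sub_left v w v
          have e2 : ‖v - w‖^2 = ‖v‖^2 - 2 * dt v w + ‖w‖^2 := by
            rw [dt_inner]; exact norm_sub_sq_real v w
          have e3 : dt v v = ‖v‖^2 := (norm_sq_eq_dt v).symm
          have e4 : dt v w = dt w v := dt_comm v w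
          rw [e1, e2, e3, e4]
          nlinarith [mul_le_mul_of_nonneg_right h7 (sq_nonneg ‖v‖), h8]
        calc (1/4096) * jb v ^ γ * ((3/64) * ‖v‖^2)
            ≤ ‖v - w‖ ^ γ * (‖v - w‖^2 * ‖v‖^2 - (dt (v - w) v)^2) := by
              apply mul_le_mul hA hD (by positivity)
              exact Real.rpow_nonneg (norm_nonneg _) _
          _ = ‖v - w‖ ^ γ * (‖v - w‖ ^ 2 * ‖v‖ ^ 2 - dt (v - w) v ^ 2) := by ring
    have hfinal : (C1 * jb v ^ γ) * ‖v‖^2 ≤ ℓ₁ v * ‖v‖^2 := by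
      calc (C1 * jb v ^ γ) * ‖v‖^2
          = ((1/4096) * jb v ^ γ * ((3/64) * ‖v‖^2)) * (m₀ * Vol) := by rw [hC1]; ring
        _ ≤ ℓ₁ v * ‖v‖^2 := hcore
    exact le_of_mul_le_mul_right hfinal (by positivity)
  -- lower bound for ℓ₂
  have ell2 : ∀ v : R3, C1 * jb v ^ (γ + 2) ≤ ℓ₂ v := by
    intro v
    obtain ⟨e, f, he, hf, hve, hvf, hef⟩ := exists_perp v
    have hev : (∑ j, e j * v j) = 0 := by
      have h := hve; rw [dt_comm] at h
      simpa [dt] using h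
    have hS : ∑ i, ∑ j, abar γ v i j * e i * e j = ℓ₂ v := by
      calc ∑ i, ∑ j, abar γ v i j * e i * e j
          = ∑ i, (∑ j, abar γ v i j * e j) * e i := by
            refine Finset.sum_congr rfl fun i _ => ?_
            rw [Finset.sum_mul]
            exact Finset.sum_congr rfl fun j _ => by ring
        _ = ∑ i, (ℓ₂ v * e i) * e i :=
            Finset.sum_congr rfl fun i _ => by rw [h2 v e hev i]
        _ = ℓ₂ v * ∑ i, e i * e i := by
            rw [Finset.mul_sum]
            exact Finset.sum_congr rfl fun i _ => by ring
        _ = ℓ₂ v := by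
            have : (∑ i, e i * e i) = dt e e := rfl
            rw [this, ← norm_sq_eq_dt, he]; norm_num
    have hjb : 0 < jb v := jb_pos v
    have hcore : ((1/4096) * jb v ^ (γ+2) * (3/4)) * (m₀ * Vol) ≤ ℓ₂ v := by
      rw [← hS]
      refine eig_core hγ v e ?_ hf ?_
      · apply mul_nonneg (mul_nonneg (by norm_num) (Real.rpow_nonneg hjb.le _))
        norm_num
      · intro w hw
        obtain ⟨g1, g2, g3, g4, g5, g6⟩ := geom hf hvf hw
        have hz : v - w ≠ 0 := by
          intro h; rw [h, norm_zero] at g1; norm_num at g1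
        have hzn : (0:ℝ) < ‖v - w‖ := lt_of_lt_of_le (by norm_num) g1
        rw [Q_formula' γ e hz]
        have hA : (1/4096) * jb v ^ (γ+2) ≤ ‖v - w‖ ^ (γ+2) :=
          rpow_ratio hjb g4 g5 (by linarith [hγ.1]) (by linarith [hγ.2])
        have hed := g6 e he hef
        have hde : dt (v - w) e = - dt w e := by rw [dt_sub_left, hve]; ring
        have h8 : (dt w e)^2 ≤ ((1:ℝ)/32)^2 :=
          sq_le_sq' (abs_le.1 hed).1 (abs_le.1 hed).2
        have h9 : ((7:ℝ)/32)^2 ≤ ‖v - w‖^2 := pow_le_pow_left₀ (by norm_num) g1 2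
        have hD : (3/4) * ‖v - w‖^2 ≤ ‖v - w‖^2 * ‖e‖^2 - (dt (v - w) e)^2 := by
          rw [he, hde]
          nlinarith [h8, h9]
        calc (1/4096) * jb v ^ (γ+2) * (3/4)
            ≤ ‖v - w‖^(γ+2) * (3/4) := mul_le_mul_of_nonneg_right hA (by norm_num)
          _ = ‖v - w‖^γ * ((3/4) * ‖v - w‖^2) := by rw [rpow_split hzn]; ring
          _ ≤ ‖v - w‖^γ * (‖v - w‖^2 * ‖e‖^2 - (dt (v - w) e)^2) :=
              mul_le_mul_of_nonneg_left hD (Real.rpow_nonneg (norm_nonneg _) _)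
          _ = ‖v - w‖ ^ γ * (‖v - w‖ ^ 2 * ‖e‖ ^ 2 - dt (v - w) e ^ 2) := by ring
    calc C1 * jb v ^ (γ+2)
        = ((3/64) * (1/4096) * jb v ^ (γ+2)) * (m₀ * Vol) := by rw [hC1]; ring
      _ ≤ ((1/4096) * jb v ^ (γ+2) * (3/4)) * (m₀ * Vol) := by
          apply mul_le_mul_of_nonneg_right _ (mul_nonneg m₀_pos.le Vol_pos.le)
          nlinarith [Real.rpow_nonneg hjb.le (γ+2)]
      _ ≤ ℓ₂ v := hcore
  -- main conclusion
  refine ⟨C1, hC1pos, fun v ξ => ?_⟩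
  set p := projv v ξ with hp
  set q := ξ - p with hq0
  have hξj : ∀ j, ξ j = p j + q j := by
    intro j; rw [hq0]; simp
  have hpj : ∀ i, ∑ j, abar γ v i j * p j = ℓ₁ v * p i := by
    rcases eq_or_ne v 0 with rfl | hv
    · intro i
      have hp0 : p = 0 := by rw [hp, projv, if_pos rfl]
      rw [hp0]; simp
    · intro i
      have hpt : p = ((∑ j, ξ j * v j) / ‖v‖ ^ 2) • v := by rw [hp, projv, if_neg hv]
      have hpj' : ∀ j, p j = ((∑ j, ξ j * v j) / ‖v‖ ^ 2) * v j := by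
        intro j; rw [hpt]; simp
      calc ∑ j, abar γ v i j * p j
          = ∑ j, ((∑ k, ξ k * v k) / ‖v‖ ^ 2) * (abar γ v i j * v j) := by
            refine Finset.sum_congr rfl fun j _ => ?_
            rw [hpj' j]; ring
        _ = ((∑ k, ξ k * v k) / ‖v‖ ^ 2) * ∑ j, abar γ v i j * v j :=
            (Finset.mul_sum _ _ _).symm
        _ = ((∑ k, ξ k * v k) / ‖v‖ ^ 2) * (ℓ₁ v * v i) := by rw [h1 v i]
        _ = ℓ₁ v * p i := by rw [hpj' i]; ring
  have hqv : dt q v = 0 := by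
    rcases eq_or_ne v 0 with rfl | hv
    · simp [dt]
    · have hpt : p = ((∑ j, ξ j * v j) / ‖v‖ ^ 2) • v := by rw [hp, projv, if_neg hv]
      have hnv : ‖v‖ ^ 2 ≠ 0 := pow_ne_zero _ (norm_ne_zero_iff.2 hv)
      have hsum : (∑ j, ξ j * v j) = dt ξ v := rfl
      rw [hq0, dt_sub_left, hpt, dt_smul_left, ← norm_sq_eq_dt, hsum]
      field_simp
      ring
  have hqj : ∀ i, ∑ j, abar γ v i j * q j = ℓ₂ v * q i := by
    have : (∑ j, q j * v j) = 0 := by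
      have := hqv; simpa [dt] using this
    exact h2 v q this
  have hpq : dt p q = 0 := by
    rcases eq_or_ne v 0 with rfl | hv
    · have hp0 : p = 0 := by rw [hp, projv, if_pos rfl]
      rw [hp0]; simp [dt]
    · have hpt : p = ((∑ j, ξ j * v j) / ‖v‖ ^ 2) • v := by rw [hp, projv, if_neg hv]
      rw [hpt, dt_smul_left, dt_comm v q, hqv, mul_zero]
  have hdtp : dt p ξ = ‖p‖ ^ 2 := by
    calc dt p ξ = ∑ i, p i * (p i + q i) := by
          refine Finset.sum_congr rfl fun i _ => by rw [← hξj i]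
      _ = (∑ i, p i * p i) + ∑ i, p i * q i := by
          simp [mul_add, Finset.sum_add_distrib]
      _ = dt p p + dt p q := rfl
      _ = ‖p‖ ^ 2 := by rw [hpq, ← norm_sq_eq_dt, add_zero]
  have hdtq : dt q ξ = ‖q‖ ^ 2 := by
    calc dt q ξ = ∑ i, q i * (p i + q i) := by
          refine Finset.sum_congr rfl fun i _ => by rw [← hξj i]
      _ = (∑ i, q i * p i) + ∑ i, q i * q i := by
          simp [mul_add, Finset.sum_add_distrib]
      _ = dt q p + dt q q := rfl
      _ = ‖q‖ ^ 2 := by rw [dt_comm q p, hpq, ← norm_sq_eq_dt, zero_add]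
  have hid : ∑ i, ∑ j, abar γ v i j * ξ i * ξ j
      = ℓ₁ v * ‖p‖ ^ 2 + ℓ₂ v * ‖q‖ ^ 2 := by
    calc ∑ i, ∑ j, abar γ v i j * ξ i * ξ j
        = ∑ i, ((∑ j, abar γ v i j * p j) + (∑ j, abar γ v i j * q j)) * ξ i := by
          refine Finset.sum_congr rfl fun i _ => ?_
          rw [← Finset.sum_add_distrib, Finset.sum_mul]
          refine Finset.sum_congr rfl fun j _ => ?_
          rw [hξj j]; ring
      _ = ∑ i, (ℓ₁ v * p i + ℓ₂ v * q i) * ξ i := by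
          refine Finset.sum_congr rfl fun i _ => by rw [hpj i, hqj i]
      _ = ℓ₁ v * (∑ i, p i * ξ i) + ℓ₂ v * (∑ i, q i * ξ i) := by
          rw [Finset.mul_sum, Finset.mul_sum, ← Finset.sum_add_distrib]
          refine Finset.sum_congr rfl fun i _ => by ring
      _ = ℓ₁ v * dt p ξ + ℓ₂ v * dt q ξ := rfl
      _ = ℓ₁ v * ‖p‖ ^ 2 + ℓ₂ v * ‖q‖ ^ 2 := by rw [hdtp, hdtq]
  refine ⟨hid, ?_⟩
  rw [hid]
  have hb2 : C1 * jb v ^ (γ+2) * ‖q‖^2 ≤ ℓ₂ v * ‖q‖^2 :=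
    mul_le_mul_of_nonneg_right (ell2 v) (sq_nonneg _)
  have hb1 : C1 * jb v ^ γ * ‖p‖^2 ≤ ℓ₁ v * ‖p‖^2 := by
    rcases eq_or_ne v 0 with rfl | hv
    · have hp0 : p = 0 := by rw [hp, projv, if_pos rfl]
      rw [hp0]; simp
    · exact mul_le_mul_of_nonneg_right (ell1 v hv) (sq_nonneg _)
  nlinarith [hb1, hb2]
end
end
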